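/- With d = 1 and the pair (T₂, D ≡ 1) as underlying event time and type and (T̃, D̃) as observed exit time and type: (i) identity of forces of mortality holds, that is, ∫_{(0,u]} P(T₂ ≥ s)^{-1} μ(ds) = ∫_{(0,u]} P(T̃ ≥ s)^{-1} μ̃₁(ds) for all u ∈ [0,1), where μ(A) = P(T₂ ∈ A) and μ̃₁(A) = P(T̃ ∈ A, D̃ = 1); but (ii) non-prognostic observation fails: there exist s, u ∈ (0,1) with P(T̃ > s) > 0 and P(T₂ > s) > 0 such that P(T₂ ≤ u | T̃ > s) ≠ P(T₂ ≤ u | T₂ > s). Hence the identifiability property does not imply the representativity property. -/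

import Mathlib

open Set MeasureTheory ENNReal

/-- The uniform probability measure on the unit square `[0,1]²`. -/
noncomputable def Punif : Measure (ℝ × ℝ) :=
  (volume.restrict (Icc (0:ℝ) 1)).prod (volume.restrict (Icc (0:ℝ) 1))

/-- The event time `T₂`. -/
noncomputable def exT2 (p : ℝ × ℝ) : ℝ :=
  if 1/2 ≤ p.1 ∧ p.1 ≤ 1 ∧ 0 ≤ p.2 ∧ p.2 < 1/2 then 1 - p.2 else p.1

/-- The observed exit time `T̃(t,c) = min(t,c)`. -/
noncomputable def exTt (p : ℝ × ℝ) : ℝ := min p.1 p.2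

/-- The law of `T₂`: `μ(A) = P(T₂ ∈ A)`. -/
noncomputable def exMu : Measure ℝ := Measure.map exT2 Punif

/-- The observed cause-1 measure `μ̃₁(A) = P(T̃ ∈ A, D̃ = 1)`, where `D̃ = 1{t ≤ c}`. -/
noncomputable def exMut1 : Measure ℝ :=
  Measure.map exTt (Punif.restrict {p : ℝ × ℝ | p.1 ≤ p.2})


-- basic lemmas
lemma exA_meas : MeasurableSet {p : ℝ × ℝ | 1/2 ≤ p.1 ∧ p.1 ≤ 1 ∧ 0 ≤ p.2 ∧ p.2 < 1/2} := by
  have : {p : ℝ × ℝ | 1/2 ≤ p.1 ∧ p.1 ≤ 1 ∧ 0 ≤ p.2 ∧ p.2 < 1/2}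
      = Icc (1/2 : ℝ) 1 ×ˢ Ico (0:ℝ) (1/2) := by
    ext p; simp [Set.mem_prod, and_assoc]
  rw [this]
  exact measurableSet_Icc.prod measurableSet_Ico

lemma measurable_exT2 : Measurable exT2 := by
  unfold exT2
  exact Measurable.ite exA_meas (measurable_const.sub measurable_snd) measurable_fst

lemma measurable_exTt : Measurable exTt :=
  measurable_fst.min measurable_snd

lemma Punif_eq_restrict :
    Punif = (volume.prod volume).restrict (Icc (0:ℝ) 1 ×ˢ Icc (0:ℝ) 1) := by
  rw [Punif, Measure.prod_restrict]

lemma Punif_apply {S : Set (ℝ × ℝ)} (hS : MeasurableSet S) :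
    Punif S = (volume.prod volume) (S ∩ (Icc (0:ℝ) 1 ×ˢ Icc (0:ℝ) 1)) := by
  rw [Punif_eq_restrict, Measure.restrict_apply hS]

lemma vol2_prod (A B : Set ℝ) :
    (volume.prod volume) (A ×ˢ B) = volume A * volume B := by
  rw [Measure.prod_prod]

instance : IsProbabilityMeasure (volume.restrict (Icc (0:ℝ) 1)) := by
  constructor
  simp [Real.volume_Icc]

instance : IsProbabilityMeasure Punif := by
  rw [Punif]; infer_instance

instance : IsProbabilityMeasure exMu := by
  rw [exMu]; exact Measure.isProbabilityMeasure_map measurable_exT2.aemeasurable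

lemma setT2_lo {s : ℝ} (hs0 : 0 ≤ s) (hs : s ≤ 1/2) :
    {p : ℝ × ℝ | s ≤ exT2 p} ∩ (Icc (0:ℝ) 1 ×ˢ Icc (0:ℝ) 1)
      = Icc s 1 ×ˢ Icc (0:ℝ) 1 := by
  ext ⟨t, c⟩
  simp only [exT2, mem_inter_iff, mem_setOf_eq, mem_prod, mem_Icc]
  constructor
  · rintro ⟨h1, ⟨ht0, ht1⟩, hc⟩
    split_ifs at h1 with h
    · exact ⟨⟨by linarith [h.1], ht1⟩, hc⟩
    · exact ⟨⟨h1, ht1⟩, hc⟩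
  · rintro ⟨⟨hts, ht1⟩, hc0, hc1⟩
    refine ⟨?_, ⟨by linarith, ht1⟩, hc0, hc1⟩
    split_ifs with h
    · linarith [h.2.2.2]
    · exact hts

lemma setT2_hi {s : ℝ} (hs : 1/2 < s) (hs1 : s ≤ 1) :
    {p : ℝ × ℝ | s ≤ exT2 p} ∩ (Icc (0:ℝ) 1 ×ˢ Icc (0:ℝ) 1)
      = (Icc (1/2 : ℝ) 1 ×ˢ Icc (0:ℝ) (1 - s)) ∪ (Icc s 1 ×ˢ Icc (1/2 : ℝ) 1) := by
  ext ⟨t, c⟩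
  simp only [exT2, mem_inter_iff, mem_setOf_eq, mem_prod, mem_Icc, mem_union]
  constructor
  · rintro ⟨h1, ⟨ht0, ht1⟩, hc0, hc1⟩
    split_ifs at h1 with h
    · exact Or.inl ⟨⟨h.1, ht1⟩, hc0, by linarith⟩
    · right
      refine ⟨⟨h1, ht1⟩, ?_, hc1⟩
      by_contra hcc
      push_neg at hcc
      exact h ⟨by linarith, ht1, hc0, hcc⟩
  · rintro (⟨⟨ht2, ht1⟩, hc0, hc1⟩ | ⟨⟨hts, ht1⟩, hc2, hc1⟩)
    · refine ⟨?_, ⟨by linarith, ht1⟩, hc0, by linarith⟩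
      split_ifs with h
      · linarith
      · exact absurd ⟨ht2, ht1, hc0, by linarith⟩ h
    · refine ⟨?_, ⟨by linarith, ht1⟩, by linarith, hc1⟩
      split_ifs with h
      · linarith [h.2.2.2]
      · exact hts

lemma setTt {s : ℝ} (hs0 : 0 ≤ s) :
    {p : ℝ × ℝ | s ≤ exTt p} ∩ (Icc (0:ℝ) 1 ×ˢ Icc (0:ℝ) 1)
      = Icc s 1 ×ˢ Icc s 1 := by
  ext ⟨t, c⟩
  simp only [exTt, le_min_iff, mem_inter_iff, mem_setOf_eq, mem_prod, mem_Icc]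
  constructor
  · rintro ⟨⟨h1, h2⟩, ⟨ht0, ht1⟩, hc0, hc1⟩
    exact ⟨⟨h1, ht1⟩, h2, hc1⟩
  · rintro ⟨⟨h1, ht1⟩, h2, hc1⟩
    exact ⟨⟨h1, h2⟩, ⟨by linarith, ht1⟩, by linarith, hc1⟩

lemma measT2 (s : ℝ) : MeasurableSet {p : ℝ × ℝ | s ≤ exT2 p} :=
  measurable_exT2 measurableSet_Ici

lemma measTt (s : ℝ) : MeasurableSet {p : ℝ × ℝ | s ≤ exTt p} :=
  measurable_exTt measurableSet_Ici

lemma survT2 {s : ℝ} (hs0 : 0 ≤ s) (hs1 : s ≤ 1) :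
    Punif {p : ℝ × ℝ | s ≤ exT2 p} = ENNReal.ofReal (1 - s) := by
  rw [Punif_apply (measT2 s)]
  rcases le_or_gt s (1/2) with h | h
  · rw [setT2_lo hs0 h, vol2_prod, Real.volume_Icc, Real.volume_Icc]
    simp
  · have hd : Disjoint ((Icc (1/2 : ℝ) 1 ×ˢ Icc (0:ℝ) (1 - s)))
        ((Icc s 1 ×ˢ Icc (1/2 : ℝ) 1)) := by
      rw [Set.disjoint_left]
      rintro ⟨t, c⟩ ⟨-, hc0, hc1⟩ ⟨-, hc2, -⟩
      simp only [mem_Icc] at *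
      linarith
    rw [setT2_hi h hs1, measure_union hd (measurableSet_Icc.prod measurableSet_Icc),
      vol2_prod, vol2_prod]
    simp only [Real.volume_Icc]
    rw [← ENNReal.ofReal_mul (by norm_num), ← ENNReal.ofReal_mul (by linarith),
      ← ENNReal.ofReal_add (by nlinarith) (by nlinarith)]
    congr 1
    ring

lemma survTt {s : ℝ} (hs0 : 0 ≤ s) (hs1 : s ≤ 1) :
    Punif {p : ℝ × ℝ | s ≤ exTt p} = ENNReal.ofReal (1 - s) * ENNReal.ofReal (1 - s) := by
  rw [Punif_apply (measTt s), setTt hs0, vol2_prod, Real.volume_Icc]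

lemma exMu_eq : exMu = volume.restrict (Icc (0:ℝ) 1) := by
  refine Measure.ext_of_Iic exMu _ (fun a => ?_)
  rw [exMu, Measure.map_apply measurable_exT2 measurableSet_Iic]
  rw [Punif_apply (measurable_exT2 measurableSet_Iic),
    Measure.restrict_apply measurableSet_Iic]
  have hch : exT2 ⁻¹' Iic a = {p : ℝ × ℝ | exT2 p ≤ a} := rfl
  rw [hch]
  rcases lt_or_ge a 0 with ha | ha0
  · have h1 : {p : ℝ × ℝ | exT2 p ≤ a} ∩ (Icc (0:ℝ) 1 ×ˢ Icc (0:ℝ) 1) = ∅ := by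
      ext ⟨t, c⟩
      simp only [exT2, mem_inter_iff, mem_setOf_eq, mem_prod, mem_Icc, mem_empty_iff_false,
        iff_false]
      rintro ⟨h1, ⟨ht0, ht1⟩, hc0, hc1⟩
      split_ifs at h1 <;> linarith
    have h2 : Iic a ∩ Icc (0:ℝ) 1 = ∅ := by
      ext x; simp only [mem_inter_iff, mem_Iic, mem_Icc, mem_empty_iff_false, iff_false]
      rintro ⟨h, h0, -⟩; linarith
    rw [h1, h2]
    simp
  · rcases lt_or_ge a (1/2) with ha | ha2
    · have h1 : {p : ℝ × ℝ | exT2 p ≤ a} ∩ (Icc (0:ℝ) 1 ×ˢ Icc (0:ℝ) 1)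
          = Icc (0:ℝ) a ×ˢ Icc (0:ℝ) 1 := by
        ext ⟨t, c⟩
        simp only [exT2, mem_inter_iff, mem_setOf_eq, mem_prod, mem_Icc]
        constructor
        · rintro ⟨h1, ⟨ht0, ht1⟩, hc⟩
          split_ifs at h1 with h
          · exfalso; linarith [h.2.2.2]
          · exact ⟨⟨ht0, h1⟩, hc⟩
        · rintro ⟨⟨ht0, hta⟩, hc⟩
          refine ⟨?_, ⟨ht0, by linarith⟩, hc⟩
          split_ifs with h
          · exfalso; linarith [h.1]
          · exact hta
      have h2 : Iic a ∩ Icc (0:ℝ) 1 = Icc (0:ℝ) a := by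
        ext x; simp only [mem_inter_iff, mem_Iic, mem_Icc]
        constructor
        · rintro ⟨h, h0, _⟩; exact ⟨h0, h⟩
        · rintro ⟨h0, h⟩; exact ⟨h, h0, by linarith⟩
      rw [h1, h2, vol2_prod, Real.volume_Icc]
      simp
    · rcases le_or_gt a 1 with ha1 | ha1
      · have h1 : {p : ℝ × ℝ | exT2 p ≤ a} ∩ (Icc (0:ℝ) 1 ×ˢ Icc (0:ℝ) 1)
            = (Icc (1/2 : ℝ) 1 ×ˢ Ico (1 - a) (1/2))
              ∪ ((Ico (0:ℝ) (1/2) ×ˢ Icc (0:ℝ) 1)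
              ∪ (Icc (1/2 : ℝ) a ×ˢ Icc (1/2 : ℝ) 1)) := by
          ext ⟨t, c⟩
          simp only [exT2, mem_inter_iff, mem_setOf_eq, mem_prod, mem_Icc, mem_union, mem_Ico]
          constructor
          · rintro ⟨h1, ⟨ht0, ht1⟩, hc0, hc1⟩
            split_ifs at h1 with h
            · exact Or.inl ⟨⟨h.1, ht1⟩, by linarith, h.2.2.2⟩
            · rcases lt_or_ge t (1/2) with htl | htl
              · exact Or.inr (Or.inl ⟨⟨ht0, htl⟩, hc0, hc1⟩)
              · refine Or.inr (Or.inr ⟨⟨htl, h1⟩, ?_, hc1⟩)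
                by_contra hcc
                push_neg at hcc
                exact h ⟨htl, ht1, hc0, hcc⟩
          · rintro (⟨⟨ht2, ht1⟩, hc0, hc1⟩ | ⟨⟨ht0, htl⟩, hc0, hc1⟩ | ⟨⟨htl, hta⟩, hc2, hc1⟩)
            · refine ⟨?_, ⟨by linarith, ht1⟩, by linarith, by linarith⟩
              split_ifs with h
              · linarith
              · exact absurd ⟨ht2, ht1, by linarith, hc1⟩ h
            · refine ⟨?_, ⟨ht0, by linarith⟩, hc0, hc1⟩
              split_ifs with h
              · exfalso; linarith [h.1]
              · linarith
            · refine ⟨?_, ⟨by linarith, by linarith⟩, by linarith, hc1⟩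
              split_ifs with h
              · exfalso; linarith [h.2.2.2]
              · exact hta
        have h2 : Iic a ∩ Icc (0:ℝ) 1 = Icc (0:ℝ) a := by
          ext x; simp only [mem_inter_iff, mem_Iic, mem_Icc]
          constructor
          · rintro ⟨h, h0, _⟩; exact ⟨h0, h⟩
          · rintro ⟨h0, h⟩; exact ⟨h, h0, by linarith⟩
        have hd1 : Disjoint (Icc (1/2 : ℝ) 1 ×ˢ Ico (1 - a) (1/2))
            ((Ico (0:ℝ) (1/2) ×ˢ Icc (0:ℝ) 1) ∪ (Icc (1/2 : ℝ) a ×ˢ Icc (1/2 : ℝ) 1)) := by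
          rw [Set.disjoint_left]
          rintro ⟨t, c⟩ ⟨⟨ht2, -⟩, -, hc2⟩ h
          simp only [mem_union, mem_prod, mem_Ico, mem_Icc] at ht2 hc2 h ⊢
          rcases h with ⟨⟨-, htl⟩, -⟩ | ⟨-, hcl, -⟩ <;> linarith
        have hd2 : Disjoint (Ico (0:ℝ) (1/2) ×ˢ Icc (0:ℝ) 1)
            (Icc (1/2 : ℝ) a ×ˢ Icc (1/2 : ℝ) 1) := by
          rw [Set.disjoint_left]
          rintro ⟨t, c⟩ ⟨⟨-, htl⟩, -⟩ ⟨⟨htl2, -⟩, -⟩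
          simp only [mem_Ico, mem_Icc] at *
          linarith
        rw [h1, h2,
          measure_union hd1 ((measurableSet_Ico.prod measurableSet_Icc).union
            (measurableSet_Icc.prod measurableSet_Icc)),
          measure_union hd2 (measurableSet_Icc.prod measurableSet_Icc),
          vol2_prod, vol2_prod, vol2_prod]
        simp only [Real.volume_Icc, Real.volume_Ico]
        rw [← ENNReal.ofReal_mul (by norm_num), ← ENNReal.ofReal_mul (by norm_num),
          ← ENNReal.ofReal_mul (by linarith), ← ENNReal.ofReal_add (by nlinarith) (by nlinarith),
          ← ENNReal.ofReal_add (by nlinarith) (by nlinarith)]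
        congr 1
        ring
      · have h1 : {p : ℝ × ℝ | exT2 p ≤ a} ∩ (Icc (0:ℝ) 1 ×ˢ Icc (0:ℝ) 1)
            = Icc (0:ℝ) 1 ×ˢ Icc (0:ℝ) 1 := by
          refine inter_eq_right.mpr ?_
          rintro ⟨t, c⟩ ⟨⟨ht0, ht1⟩, hc0, hc1⟩
          simp only [exT2, mem_setOf_eq]
          split_ifs with h <;> linarith
        have h2 : Iic a ∩ Icc (0:ℝ) 1 = Icc (0:ℝ) 1 := by
          refine inter_eq_right.mpr ?_
          rintro x ⟨h0, hx1⟩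
          simp only [mem_Iic]
          linarith
        rw [h1, h2, vol2_prod, Real.volume_Icc]
        norm_num

lemma nu_Ici {x : ℝ} (hx : 0 ≤ x) :
    (volume.restrict (Icc (0:ℝ) 1)) (Ici x) = ENNReal.ofReal (1 - x) := by
  rw [Measure.restrict_apply measurableSet_Ici]
  have : Ici x ∩ Icc (0:ℝ) 1 = Icc x 1 := by
    ext y; simp only [mem_inter_iff, mem_Ici, mem_Icc]
    constructor
    · rintro ⟨h, -, h1⟩; exact ⟨h, h1⟩
    · rintro ⟨h, h1⟩; exact ⟨h, by linarith, h1⟩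
  rw [this, Real.volume_Icc]

instance : IsFiniteMeasure exMut1 := by
  rw [exMut1]; exact Measure.isFiniteMeasure_map _ _

lemma exMut1_eq :
    exMut1 = (volume.restrict (Icc (0:ℝ) 1)).withDensity
      (fun t => ENNReal.ofReal (1 - t)) := by
  set ν := volume.restrict (Icc (0:ℝ) 1) with hν
  refine Measure.ext_of_Iic exMut1 _ (fun a => ?_)
  rw [exMut1, Measure.map_apply measurable_exTt measurableSet_Iic,
    Measure.restrict_apply (measurable_exTt measurableSet_Iic)]
  have hset : exTt ⁻¹' Iic a ∩ {p : ℝ × ℝ | p.1 ≤ p.2}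
      = {p : ℝ × ℝ | p.1 ≤ a ∧ p.1 ≤ p.2} := by
    ext ⟨t, c⟩
    simp only [exTt, mem_inter_iff, mem_preimage, mem_Iic, mem_setOf_eq, min_le_iff]
    constructor
    · rintro ⟨h1, h2⟩
      exact ⟨by rcases h1 with h | h <;> linarith, h2⟩
    · rintro ⟨h1, h2⟩
      exact ⟨Or.inl h1, h2⟩
  have hmeas : MeasurableSet {p : ℝ × ℝ | p.1 ≤ a ∧ p.1 ≤ p.2} := by
    exact (measurable_fst measurableSet_Iic).inter
      (measurableSet_le measurable_fst measurable_snd)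
  rw [hset, Punif, Measure.prod_apply hmeas]
  have hslice : ∀ t : ℝ, ν (Prod.mk t ⁻¹' {p : ℝ × ℝ | p.1 ≤ a ∧ p.1 ≤ p.2})
      = (Iic a).indicator (fun t => ν (Ici t)) t := by
    intro t
    by_cases ht : t ≤ a
    · have : Prod.mk t ⁻¹' {p : ℝ × ℝ | p.1 ≤ a ∧ p.1 ≤ p.2} = Ici t := by
        ext c; simp [ht]
      rw [this, indicator_of_mem (by simpa using ht)]
    · have : Prod.mk t ⁻¹' {p : ℝ × ℝ | p.1 ≤ a ∧ p.1 ≤ p.2} = ∅ := by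
        ext c; simp [ht]
      rw [this, indicator_of_notMem (by simpa using ht)]
      simp
  rw [lintegral_congr hslice, lintegral_indicator measurableSet_Iic _,
    withDensity_apply _ measurableSet_Iic]
  refine setLIntegral_congr_fun_ae measurableSet_Iic ?_
  have hae : ∀ᵐ x ∂ν, x ∈ Icc (0:ℝ) 1 := ae_restrict_mem measurableSet_Icc
  filter_upwards [hae] with x hx _
  exact nu_Ici hx.1

lemma part_i (u : ℝ) (hu0 : 0 ≤ u) (hu1 : u < 1) :
    ∫⁻ s in Ioc (0:ℝ) u, (Punif {p | s ≤ exT2 p})⁻¹ ∂exMu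
      = ∫⁻ s in Ioc (0:ℝ) u, (Punif {p | s ≤ exTt p})⁻¹ ∂exMut1 := by
  have hsub : Ioc (0:ℝ) u ∩ Icc (0:ℝ) 1 = Ioc (0:ℝ) u := by
    refine inter_eq_left.mpr (fun x hx => ?_)
    exact ⟨hx.1.le, hx.2.trans hu1.le⟩
  have hL : ∫⁻ s in Ioc (0:ℝ) u, (Punif {p | s ≤ exT2 p})⁻¹ ∂exMu
      = ∫⁻ s in Ioc (0:ℝ) u, (ENNReal.ofReal (1 - s))⁻¹ ∂volume := by
    rw [exMu_eq, Measure.restrict_restrict measurableSet_Ioc, hsub]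
    refine setLIntegral_congr_fun_ae measurableSet_Ioc (ae_of_all _ (fun s hs => ?_))
    rw [survT2 hs.1.le (hs.2.trans hu1.le)]
  have hdens : Measurable (fun t : ℝ => ENNReal.ofReal (1 - t)) :=
    (measurable_const.sub measurable_id).ennreal_ofReal
  have hG : Measurable (fun s : ℝ => (ENNReal.ofReal (1 - s) * ENNReal.ofReal (1 - s))⁻¹) :=
    (hdens.mul hdens).inv
  have hR : ∫⁻ s in Ioc (0:ℝ) u, (Punif {p | s ≤ exTt p})⁻¹ ∂exMut1
      = ∫⁻ s in Ioc (0:ℝ) u, (ENNReal.ofReal (1 - s))⁻¹ ∂volume := by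
    rw [exMut1_eq]
    rw [setLIntegral_congr_fun_ae measurableSet_Ioc (ae_of_all _
      (fun s (hs : s ∈ Ioc (0:ℝ) u) => by
        rw [survTt hs.1.le (hs.2.trans hu1.le)]))]
    rw [restrict_withDensity measurableSet_Ioc,
      lintegral_withDensity_eq_lintegral_mul _ hdens hG,
      Measure.restrict_restrict measurableSet_Ioc, hsub]
    refine setLIntegral_congr_fun_ae measurableSet_Ioc (ae_of_all _ (fun s hs => ?_))
    have hb0 : ENNReal.ofReal (1 - s) ≠ 0 := by
      rw [Ne, ENNReal.ofReal_eq_zero, not_le]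
      have := hs.2.trans_lt hu1
      linarith
    have hbt : ENNReal.ofReal (1 - s) ≠ ⊤ := ENNReal.ofReal_ne_top
    simp only [Pi.mul_apply]
    rw [ENNReal.mul_inv (Or.inl hb0) (Or.inl hbt), ← mul_assoc,
      ENNReal.mul_inv_cancel hb0 hbt, one_mul]
  rw [hL, hR]

lemma denTt : Punif {p : ℝ × ℝ | (1/4 : ℝ) < exTt p} = ENNReal.ofReal (9/16) := by
  have hm : MeasurableSet {p : ℝ × ℝ | (1/4 : ℝ) < exTt p} :=
    measurable_exTt measurableSet_Ioi
  rw [Punif_apply hm]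
  have h1 : {p : ℝ × ℝ | (1/4 : ℝ) < exTt p} ∩ (Icc (0:ℝ) 1 ×ˢ Icc (0:ℝ) 1)
      = Ioc (1/4 : ℝ) 1 ×ˢ Ioc (1/4 : ℝ) 1 := by
    ext ⟨t, c⟩
    simp only [exTt, lt_min_iff, mem_inter_iff, mem_setOf_eq, mem_prod, mem_Icc, mem_Ioc]
    constructor
    · rintro ⟨⟨h1, h2⟩, ⟨-, ht1⟩, -, hc1⟩; exact ⟨⟨h1, ht1⟩, h2, hc1⟩
    · rintro ⟨⟨h1, ht1⟩, h2, hc1⟩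
      exact ⟨⟨h1, h2⟩, ⟨by linarith, ht1⟩, by linarith, hc1⟩
  rw [h1, vol2_prod, Real.volume_Ioc, ← ENNReal.ofReal_mul (by norm_num)]
  norm_num

lemma denT2 : Punif {p : ℝ × ℝ | (1/4 : ℝ) < exT2 p} = ENNReal.ofReal (3/4) := by
  have hm : MeasurableSet {p : ℝ × ℝ | (1/4 : ℝ) < exT2 p} :=
    measurable_exT2 measurableSet_Ioi
  rw [Punif_apply hm]
  have h1 : {p : ℝ × ℝ | (1/4 : ℝ) < exT2 p} ∩ (Icc (0:ℝ) 1 ×ˢ Icc (0:ℝ) 1)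
      = Ioc (1/4 : ℝ) 1 ×ˢ Icc (0:ℝ) 1 := by
    ext ⟨t, c⟩
    simp only [exT2, mem_inter_iff, mem_setOf_eq, mem_prod, mem_Icc, mem_Ioc]
    constructor
    · rintro ⟨h1, ⟨ht0, ht1⟩, hc⟩
      split_ifs at h1 with h
      · exact ⟨⟨by linarith [h.1], ht1⟩, hc⟩
      · exact ⟨⟨h1, ht1⟩, hc⟩
    · rintro ⟨⟨hts, ht1⟩, hc0, hc1⟩
      refine ⟨?_, ⟨by linarith, ht1⟩, hc0, hc1⟩
      split_ifs with h
      · linarith [h.2.2.2]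
      · exact hts
  rw [h1, vol2_prod, Real.volume_Ioc, Real.volume_Icc]
  norm_num

lemma numTt : Punif {p : ℝ × ℝ | exT2 p ≤ 3/4 ∧ (1/4 : ℝ) < exTt p}
    = ENNReal.ofReal (7/16) := by
  have hm : MeasurableSet {p : ℝ × ℝ | exT2 p ≤ 3/4 ∧ (1/4 : ℝ) < exTt p} :=
    (measurable_exT2 measurableSet_Iic).inter (measurable_exTt measurableSet_Ioi)
  rw [Punif_apply hm]
  have h1 : {p : ℝ × ℝ | exT2 p ≤ 3/4 ∧ (1/4 : ℝ) < exTt p} ∩ (Icc (0:ℝ) 1 ×ˢ Icc (0:ℝ) 1)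
      = (Ioc (1/4 : ℝ) (3/4) ×ˢ Icc (1/2 : ℝ) 1)
        ∪ ((Ioo (1/4 : ℝ) (1/2) ×ˢ Ioo (1/4 : ℝ) (1/2))
        ∪ (Icc (1/2 : ℝ) 1 ×ˢ Ioo (1/4 : ℝ) (1/2))) := by
    ext ⟨t, c⟩
    simp only [exT2, exTt, lt_min_iff, mem_inter_iff, mem_setOf_eq, mem_prod, mem_Icc,
      mem_Ioc, mem_Ioo, mem_union]
    constructor
    · rintro ⟨⟨h1, h2, h3⟩, ⟨ht0, ht1⟩, hc0, hc1⟩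
      rcases lt_or_ge c (1/2) with hc | hc
      · rcases lt_or_ge t (1/2) with ht | ht
        · refine Or.inr (Or.inl ⟨⟨h2, ht⟩, h3, hc⟩)
        · exact Or.inr (Or.inr ⟨⟨ht, ht1⟩, h3, hc⟩)
      · refine Or.inl ⟨⟨h2, ?_⟩, hc, hc1⟩
        split_ifs at h1 with h
        · linarith [h.2.2.2]
        · exact h1
    · rintro (⟨⟨h2, h4⟩, hc2, hc1⟩ | ⟨⟨h2, h4⟩, h3, hc⟩ | ⟨⟨ht2, ht1⟩, h3, hc⟩)
      · refine ⟨⟨?_, h2, by linarith⟩, ⟨by linarith, by linarith⟩, by linarith, hc1⟩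
        split_ifs with h
        · linarith [h.2.2.2]
        · exact h4
      · refine ⟨⟨?_, h2, h3⟩, ⟨by linarith, by linarith⟩, by linarith, by linarith⟩
        split_ifs with h
        · linarith [h.1]
        · linarith
      · refine ⟨⟨?_, by linarith, h3⟩, ⟨by linarith, ht1⟩, by linarith, by linarith⟩
        split_ifs with h
        · linarith
        · exact absurd ⟨ht2, ht1, by linarith, by linarith⟩ h
  have hd1 : Disjoint (Ioc (1/4 : ℝ) (3/4) ×ˢ Icc (1/2 : ℝ) 1)
      ((Ioo (1/4 : ℝ) (1/2) ×ˢ Ioo (1/4 : ℝ) (1/2))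
        ∪ (Icc (1/2 : ℝ) 1 ×ˢ Ioo (1/4 : ℝ) (1/2))) := by
    rw [Set.disjoint_left]
    rintro ⟨t, c⟩ ⟨-, hc2, -⟩ h
    simp only [mem_union, mem_prod, mem_Ioo, mem_Icc] at hc2 h
    rcases h with ⟨-, -, hcl⟩ | ⟨-, -, hcl⟩ <;> linarith
  have hd2 : Disjoint (Ioo (1/4 : ℝ) (1/2) ×ˢ Ioo (1/4 : ℝ) (1/2))
      (Icc (1/2 : ℝ) 1 ×ˢ Ioo (1/4 : ℝ) (1/2)) := by
    rw [Set.disjoint_left]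
    rintro ⟨t, c⟩ ⟨⟨-, htl⟩, -⟩ ⟨⟨htl2, -⟩, -⟩
    simp only [mem_Ioo, mem_Icc] at *
    linarith
  rw [h1, measure_union hd1 ((measurableSet_Ioo.prod measurableSet_Ioo).union
      (measurableSet_Icc.prod measurableSet_Ioo)),
    measure_union hd2 (measurableSet_Icc.prod measurableSet_Ioo),
    vol2_prod, vol2_prod, vol2_prod]
  simp only [Real.volume_Ioc, Real.volume_Icc, Real.volume_Ioo]
  rw [← ENNReal.ofReal_mul (by norm_num), ← ENNReal.ofReal_mul (by norm_num),
    ← ENNReal.ofReal_mul (by norm_num), ← ENNReal.ofReal_add (by norm_num) (by norm_num),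
    ← ENNReal.ofReal_add (by norm_num) (by norm_num)]
  norm_num

lemma numT2 : Punif {p : ℝ × ℝ | exT2 p ≤ 3/4 ∧ (1/4 : ℝ) < exT2 p}
    = ENNReal.ofReal (1/2) := by
  have hm : MeasurableSet {p : ℝ × ℝ | exT2 p ≤ 3/4 ∧ (1/4 : ℝ) < exT2 p} :=
    (measurable_exT2 measurableSet_Iic).inter (measurable_exT2 measurableSet_Ioi)
  rw [Punif_apply hm]
  have h1 : {p : ℝ × ℝ | exT2 p ≤ 3/4 ∧ (1/4 : ℝ) < exT2 p} ∩ (Icc (0:ℝ) 1 ×ˢ Icc (0:ℝ) 1)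
      = (Icc (1/2 : ℝ) 1 ×ˢ Ico (1/4 : ℝ) (1/2))
        ∪ ((Ioo (1/4 : ℝ) (1/2) ×ˢ Icc (0:ℝ) 1)
        ∪ (Icc (1/2 : ℝ) (3/4) ×ˢ Icc (1/2 : ℝ) 1)) := by
    ext ⟨t, c⟩
    simp only [exT2, mem_inter_iff, mem_setOf_eq, mem_prod, mem_Icc, mem_Ico, mem_Ioo, mem_union]
    constructor
    · rintro ⟨⟨h1, h2⟩, ⟨ht0, ht1⟩, hc0, hc1⟩
      split_ifs at h1 h2 with h
      · exact Or.inl ⟨⟨h.1, ht1⟩, by linarith, h.2.2.2⟩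
      · rcases lt_or_ge t (1/2) with ht | ht
        · exact Or.inr (Or.inl ⟨⟨h2, ht⟩, hc0, hc1⟩)
        · refine Or.inr (Or.inr ⟨⟨ht, h1⟩, ?_, hc1⟩)
          by_contra hcc
          push_neg at hcc
          exact h ⟨ht, ht1, hc0, hcc⟩
    · rintro (⟨⟨ht2, ht1⟩, hc4, hc2⟩ | ⟨⟨h2, h4⟩, hc0, hc1⟩ | ⟨⟨ht2, ht3⟩, hc2, hc1⟩)
      · refine ⟨⟨?_, ?_⟩, ⟨by linarith, ht1⟩, by linarith, by linarith⟩
        · split_ifs with h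
          · linarith
          · exact absurd ⟨ht2, ht1, by linarith, hc2⟩ h
        · split_ifs with h
          · linarith
          · exact absurd ⟨ht2, ht1, by linarith, hc2⟩ h
      · refine ⟨⟨?_, ?_⟩, ⟨by linarith, by linarith⟩, hc0, hc1⟩
        · split_ifs with h
          · linarith [h.1]
          · linarith
        · split_ifs with h
          · linarith [h.1]
          · exact h2
      · refine ⟨⟨?_, ?_⟩, ⟨by linarith, by linarith⟩, by linarith, hc1⟩
        · split_ifs with h
          · linarith [h.2.2.2]
          · exact ht3
        · split_ifs with h
          · linarith [h.2.2.2]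
          · linarith
  have hd1 : Disjoint (Icc (1/2 : ℝ) 1 ×ˢ Ico (1/4 : ℝ) (1/2))
      ((Ioo (1/4 : ℝ) (1/2) ×ˢ Icc (0:ℝ) 1) ∪ (Icc (1/2 : ℝ) (3/4) ×ˢ Icc (1/2 : ℝ) 1)) := by
    rw [Set.disjoint_left]
    rintro ⟨t, c⟩ ⟨⟨ht2, -⟩, -, hc2⟩ h
    simp only [mem_union, mem_prod, mem_Ioo, mem_Icc, mem_Ico] at ht2 hc2 h ⊢
    rcases h with ⟨⟨-, htl⟩, -⟩ | ⟨-, hcl, -⟩ <;> linarith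
  have hd2 : Disjoint (Ioo (1/4 : ℝ) (1/2) ×ˢ Icc (0:ℝ) 1)
      (Icc (1/2 : ℝ) (3/4) ×ˢ Icc (1/2 : ℝ) 1) := by
    rw [Set.disjoint_left]
    rintro ⟨t, c⟩ ⟨⟨-, htl⟩, -⟩ ⟨⟨htl2, -⟩, -⟩
    simp only [mem_Ioo, mem_Icc] at *
    linarith
  rw [h1, measure_union hd1 ((measurableSet_Ioo.prod measurableSet_Icc).union
      (measurableSet_Icc.prod measurableSet_Icc)),
    measure_union hd2 (measurableSet_Icc.prod measurableSet_Icc),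
    vol2_prod, vol2_prod, vol2_prod]
  simp only [Real.volume_Ioo, Real.volume_Icc, Real.volume_Ico]
  rw [← ENNReal.ofReal_mul (by norm_num), ← ENNReal.ofReal_mul (by norm_num),
    ← ENNReal.ofReal_mul (by norm_num), ← ENNReal.ofReal_add (by norm_num) (by norm_num),
    ← ENNReal.ofReal_add (by norm_num) (by norm_num)]
  norm_num

/-- With `(T₂, D ≡ 1)` as underlying event time and type and `(T̃, D̃)` observed:
identity of forces of mortality holds, but non-prognostic observation fails.  Hence the
identifiability property does not imply the representativity property. -/
theorem identifiability_without_representativity :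
    -- (i) identity of forces of mortality on [0,1)
    (∀ u : ℝ, 0 ≤ u → u < 1 →
      ∫⁻ s in Ioc (0:ℝ) u, (Punif {p | s ≤ exT2 p})⁻¹ ∂exMu
        = ∫⁻ s in Ioc (0:ℝ) u, (Punif {p | s ≤ exTt p})⁻¹ ∂exMut1) ∧
    -- (ii) non-prognostic observation fails
    (∃ s u : ℝ, 0 < s ∧ s < 1 ∧ 0 < u ∧ u < 1 ∧
      0 < Punif {p | s < exTt p} ∧ 0 < Punif {p | s < exT2 p} ∧
      Punif {p | exT2 p ≤ u ∧ s < exTt p} / Punif {p | s < exTt p}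
        ≠ Punif {p | exT2 p ≤ u ∧ s < exT2 p} / Punif {p | s < exT2 p}) := by
  refine ⟨part_i, 1/4, 3/4, by norm_num, by norm_num, by norm_num, by norm_num, ?_, ?_, ?_⟩
  · rw [denTt]; exact ENNReal.ofReal_pos.mpr (by norm_num)
  · rw [denT2]; exact ENNReal.ofReal_pos.mpr (by norm_num)
  · rw [denTt, denT2, numTt, numT2]
    intro h
    have h2 := congrArg ENNReal.toReal h
    rw [ENNReal.toReal_div, ENNReal.toReal_div, ENNReal.toReal_ofReal (by norm_num),
      ENNReal.toReal_ofReal (by norm_num), ENNReal.toReal_ofReal (by norm_num),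
      ENNReal.toReal_ofReal (by norm_num)] at h2
    norm_num at h2
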